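/- Let K(x,y) = β/x on {x > 0}, and let φ satisfy cos φ = (y² − x²)/(x² + y²), sin φ = 2xy/(x² + y²). Then ρ(x,y) = β/x satisfies ∂ρ/∂x = ∂/∂x(K cos φ) − ∂/∂y(K sin φ) and ∂ρ/∂y = −∂/∂x(K sin φ) − ∂/∂y(K cos φ); hence K = ρ. -/

import Mathlib

noncomputable def pdx (f : ℝ × ℝ → ℝ) (p : ℝ × ℝ) : ℝ := fderiv ℝ f p (1, 0)
noncomputable def pdy (f : ℝ × ℝ → ℝ) (p : ℝ × ℝ) : ℝ := fderiv ℝ f p (0, 1)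

section aux

variable (β : ℝ) (p : ℝ × ℝ) (hp : 0 < p.1)

private lemma aux_hasF (hp : 0 < p.1) :
    HasFDerivAt (fun q : ℝ × ℝ => β * (q.2^2 - q.1^2) / (q.1 * (q.1^2 + q.2^2)))
      ((β * (p.2 ^ 2 - p.1 ^ 2)) •
        (-((p.1 * (p.1 ^ 2 + p.2 ^ 2)) ^ 2)⁻¹ •
          (p.1 •
              (p.1 • ContinuousLinearMap.fst ℝ ℝ ℝ + p.1 • ContinuousLinearMap.fst ℝ ℝ ℝ +
                (p.2 • ContinuousLinearMap.snd ℝ ℝ ℝ + p.2 • ContinuousLinearMap.snd ℝ ℝ ℝ)) +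
            (p.1 ^ 2 + p.2 ^ 2) • ContinuousLinearMap.fst ℝ ℝ ℝ)) +
      (p.1 * (p.1 ^ 2 + p.2 ^ 2))⁻¹ •
        (β •
          (p.2 • ContinuousLinearMap.snd ℝ ℝ ℝ + p.2 • ContinuousLinearMap.snd ℝ ℝ ℝ -
            (p.1 • ContinuousLinearMap.fst ℝ ℝ ℝ + p.1 • ContinuousLinearMap.fst ℝ ℝ ℝ)))) p := by
  have hx := hp.ne'
  have hd : p.1 * (p.1 ^ 2 + p.2 ^ 2) ≠ 0 := by positivity
  have h1 : HasFDerivAt (fun q : ℝ × ℝ => q.1) (ContinuousLinearMap.fst ℝ ℝ ℝ) p := hasFDerivAt_fst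
  have h2 : HasFDerivAt (fun q : ℝ × ℝ => q.2) (ContinuousLinearMap.snd ℝ ℝ ℝ) p := hasFDerivAt_snd
  have h1s : HasFDerivAt (fun q : ℝ × ℝ => q.1^2)
      (p.1 • ContinuousLinearMap.fst ℝ ℝ ℝ + p.1 • ContinuousLinearMap.fst ℝ ℝ ℝ) p := by
    simpa [pow_two, Pi.mul_def] using h1.mul h1
  have h2s : HasFDerivAt (fun q : ℝ × ℝ => q.2^2)
      (p.2 • ContinuousLinearMap.snd ℝ ℝ ℝ + p.2 • ContinuousLinearMap.snd ℝ ℝ ℝ) p := by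
    simpa [pow_two, Pi.mul_def] using h2.mul h2
  have hD := h1.mul (h1s.add h2s)
  have hinv := (hasDerivAt_inv hd).comp_hasFDerivAt p hD
  have hF := ((h2s.sub h1s).const_mul β).mul hinv
  simp only [Function.comp_def] at hF
  have hfun : (fun q : ℝ × ℝ => β * (q.2^2 - q.1^2) / (q.1 * (q.1^2 + q.2^2)))
      = (fun q : ℝ × ℝ => (β * (q.2^2 - q.1^2)) * (q.1 * (q.1^2 + q.2^2))⁻¹) := by
    funext q; rw [div_eq_mul_inv]
  rw [hfun]
  exact hF

private lemma aux_hasG (hp : 0 < p.1) :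
    HasFDerivAt (fun q : ℝ × ℝ => 2 * β * q.2 / (q.1^2 + q.2^2))
      ((2 * β * p.2) •
        (-((p.1 ^ 2 + p.2 ^ 2) ^ 2)⁻¹ •
          (p.1 • ContinuousLinearMap.fst ℝ ℝ ℝ + p.1 • ContinuousLinearMap.fst ℝ ℝ ℝ +
            (p.2 • ContinuousLinearMap.snd ℝ ℝ ℝ + p.2 • ContinuousLinearMap.snd ℝ ℝ ℝ))) +
      (p.1 ^ 2 + p.2 ^ 2)⁻¹ • ((2 * β) • ContinuousLinearMap.snd ℝ ℝ ℝ)) p := by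
  have hx := hp.ne'
  have hs : p.1 ^ 2 + p.2 ^ 2 ≠ 0 := by positivity
  have h1 : HasFDerivAt (fun q : ℝ × ℝ => q.1) (ContinuousLinearMap.fst ℝ ℝ ℝ) p := hasFDerivAt_fst
  have h2 : HasFDerivAt (fun q : ℝ × ℝ => q.2) (ContinuousLinearMap.snd ℝ ℝ ℝ) p := hasFDerivAt_snd
  have h1s : HasFDerivAt (fun q : ℝ × ℝ => q.1^2)
      (p.1 • ContinuousLinearMap.fst ℝ ℝ ℝ + p.1 • ContinuousLinearMap.fst ℝ ℝ ℝ) p := by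
    simpa [pow_two, Pi.mul_def] using h1.mul h1
  have h2s : HasFDerivAt (fun q : ℝ × ℝ => q.2^2)
      (p.2 • ContinuousLinearMap.snd ℝ ℝ ℝ + p.2 • ContinuousLinearMap.snd ℝ ℝ ℝ) p := by
    simpa [pow_two, Pi.mul_def] using h2.mul h2
  have hinv := (hasDerivAt_inv hs).comp_hasFDerivAt p (h1s.add h2s)
  have hG := ((h2.const_mul (2*β))).mul hinv
  simp only [Function.comp_def] at hG
  have hfun : (fun q : ℝ × ℝ => 2 * β * q.2 / (q.1^2 + q.2^2))
      = (fun q : ℝ × ℝ => (2 * β * q.2) * (q.1^2 + q.2^2)⁻¹) := by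
    funext q; rw [div_eq_mul_inv]
  rw [hfun]
  exact hG

private lemma aux_hasB (hp : 0 < p.1) :
    HasFDerivAt (fun q : ℝ × ℝ => β / q.1)
      (β • (-((p.1 ^ 2)⁻¹) • ContinuousLinearMap.fst ℝ ℝ ℝ)) p := by
  have hx := hp.ne'
  have h1 : HasFDerivAt (fun q : ℝ × ℝ => q.1) (ContinuousLinearMap.fst ℝ ℝ ℝ) p := hasFDerivAt_fst
  have hinv := (hasDerivAt_inv hx).comp_hasFDerivAt p h1
  have hB := hinv.const_mul β
  simp only [Function.comp_def] at hB
  have hfun : (fun q : ℝ × ℝ => β / q.1) = (fun q : ℝ × ℝ => β * (q.1)⁻¹) := by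
    funext q; rw [div_eq_mul_inv]
  rw [hfun]
  exact hB

end aux

theorem stmt18 (β : ℝ) (φ : ℝ × ℝ → ℝ)
    (hcos : ∀ p : ℝ × ℝ, 0 < p.1 →
      Real.cos (φ p) = (p.2 ^ 2 - p.1 ^ 2) / (p.1 ^ 2 + p.2 ^ 2))
    (hsin : ∀ p : ℝ × ℝ, 0 < p.1 →
      Real.sin (φ p) = 2 * p.1 * p.2 / (p.1 ^ 2 + p.2 ^ 2)) :
    (∀ p : ℝ × ℝ, 0 < p.1 →
      pdx (fun q : ℝ × ℝ => β / q.1) p =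
        pdx (fun q : ℝ × ℝ => (β / q.1) * Real.cos (φ q)) p -
        pdy (fun q : ℝ × ℝ => (β / q.1) * Real.sin (φ q)) p ∧
      pdy (fun q : ℝ × ℝ => β / q.1) p =
        -pdx (fun q : ℝ × ℝ => (β / q.1) * Real.sin (φ q)) p -
        pdy (fun q : ℝ × ℝ => (β / q.1) * Real.cos (φ q)) p) ∧
    (∀ p : ℝ × ℝ, 0 < p.1 → (β / p.1 : ℝ) = β / p.1) := by
  refine ⟨fun p hp => ?_, fun p hp => rfl⟩
  have hx := hp.ne'
  have hs : p.1 ^ 2 + p.2 ^ 2 ≠ 0 := by positivity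
  have hnb : ∀ᶠ q in nhds p, 0 < q.1 :=
    (isOpen_lt continuous_const continuous_fst).mem_nhds hp
  have hEcos : (fun q : ℝ × ℝ => (β / q.1) * Real.cos (φ q)) =ᶠ[nhds p]
      (fun q : ℝ × ℝ => β * (q.2^2 - q.1^2) / (q.1 * (q.1^2 + q.2^2))) := by
    filter_upwards [hnb] with q hq
    have hq1 := hq.ne'
    have hq2 : q.1 ^ 2 + q.2 ^ 2 ≠ 0 := by positivity
    rw [hcos q hq]
    field_simp
  have hEsin : (fun q : ℝ × ℝ => (β / q.1) * Real.sin (φ q)) =ᶠ[nhds p]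
      (fun q : ℝ × ℝ => 2 * β * q.2 / (q.1^2 + q.2^2)) := by
    filter_upwards [hnb] with q hq
    have hq1 := hq.ne'
    have hq2 : q.1 ^ 2 + q.2 ^ 2 ≠ 0 := by positivity
    rw [hsin q hq]
    field_simp
  have hcF := hEcos.fderiv_eq (𝕜 := ℝ)
  have hcG := hEsin.fderiv_eq (𝕜 := ℝ)
  have hF := (aux_hasF β p hp).fderiv
  have hG := (aux_hasG β p hp).fderiv
  have hB := (aux_hasB β p hp).fderiv
  constructor
  · show fderiv ℝ _ p (1,0) = fderiv ℝ _ p (1,0) - fderiv ℝ _ p (0,1)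
    rw [hcF, hcG, hB, hF, hG]
    simp [ContinuousLinearMap.smul_apply, ContinuousLinearMap.add_apply,
      ContinuousLinearMap.sub_apply]
    field_simp
    ring
  · show fderiv ℝ _ p (0,1) = -fderiv ℝ _ p (1,0) - fderiv ℝ _ p (0,1)
    rw [hcF, hcG, hB, hF, hG]
    simp [ContinuousLinearMap.smul_apply, ContinuousLinearMap.add_apply,
      ContinuousLinearMap.sub_apply]
    field_simp
    ring
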